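/- Let λ ≥ 0, μ > 0, and 0 < q < p with Δ = p − q. Define h(g0) = (e^{(λ+μ·g0)Δ} − 1)/(p − q·e^{(λ+μ·g0)Δ}) on the domain D = {g0 ≥ 0 : (λ + μ·g0)·Δ < log(p/q)} (on which the denominator p − q·e^{(λ+μ·g0)Δ} is positive). Then h is strictly increasing on D and h is a convex function on D. -/

import Mathlib

open Real

/-- The boundary curve `h(g0) = (e^{(λ+μg0)Δ} - 1)/(p - q e^{(λ+μg0)Δ})` between the
quantization regions of two adjacent power levels `p > q > 0` is strictly increasing
and convex on the domain where its denominator is positive. -/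
theorem boundary_strictMono_convex
    (lam mu p q : ℝ) (hlam : 0 ≤ lam) (hmu : 0 < mu)
    (hq : 0 < q) (hqp : q < p) :
    StrictMonoOn
      (fun g0 : ℝ => (Real.exp ((lam + mu * g0) * (p - q)) - 1) /
        (p - q * Real.exp ((lam + mu * g0) * (p - q))))
      {g0 : ℝ | 0 ≤ g0 ∧ (lam + mu * g0) * (p - q) < Real.log (p / q)} ∧
    ConvexOn ℝ {g0 : ℝ | 0 ≤ g0 ∧ (lam + mu * g0) * (p - q) < Real.log (p / q)}
      (fun g0 : ℝ => (Real.exp ((lam + mu * g0) * (p - q)) - 1) /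
        (p - q * Real.exp ((lam + mu * g0) * (p - q)))) := by
  have hp : 0 < p := hq.trans hqp
  have hΔ : 0 < p - q := sub_pos.2 hqp
  set L : ℝ := Real.log (p / q) with hL
  set t : ℝ := (L / (p - q) - lam) / mu with ht
  set E : ℝ → ℝ := fun x => Real.exp ((lam + mu * x) * (p - q)) with hE
  set f : ℝ → ℝ := fun g0 : ℝ => (E g0 - 1) / (p - q * E g0) with hf
  set D : Set ℝ := {g0 : ℝ | 0 ≤ g0 ∧ (lam + mu * g0) * (p - q) < L} with hDdef
  -- the domain is the interval `Ico 0 t`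
  have hkey : ∀ x : ℝ, (lam + mu * x) * (p - q) < L ↔ x < t := by
    intro x
    rw [ht, ← lt_div_iff₀ hΔ, ← lt_sub_iff_add_lt', ← lt_div_iff₀' hmu]
  have hset : D = Set.Ico 0 t := by
    ext x
    simp only [hDdef, Set.mem_setOf_eq, Set.mem_Ico, hkey x]
  have hDconv : Convex ℝ D := hset ▸ convex_Ico 0 t
  -- denominator is positive on the domain
  have hden : ∀ x ∈ D, 0 < p - q * E x := by
    intro x hx
    have h1 : E x < p / q := by
      rw [hE, ← Real.exp_log (div_pos hp hq)]
      exact Real.exp_lt_exp.2 hx.2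
    have h2 : E x * q < p := (lt_div_iff₀ hq).1 h1
    nlinarith
  -- continuity
  have hc : ContinuousOn f D := by
    apply ContinuousOn.div
    · fun_prop
    · fun_prop
    · exact fun x hx => (hden x hx).ne'
  -- derivative of the exponential part
  have hEd : ∀ x : ℝ, HasDerivAt E (mu * (p - q) * E x) x := by
    intro x
    have h1 : HasDerivAt (fun y : ℝ => (lam + mu * y) * (p - q)) (mu * (p - q)) x := by
      have h0 : HasDerivAt (fun y : ℝ => lam + mu * y) mu x := by
        simpa using ((hasDerivAt_id x).const_mul mu).const_add lam
      simpa using h0.mul_const (p - q)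
    have := h1.exp
    convert this using 1
    ring
  -- derivative of f on the domain
  have hfd : ∀ x ∈ D, HasDerivAt f (mu * (p - q) ^ 2 * E x / (p - q * E x) ^ 2) x := by
    intro x hx
    have hnum : HasDerivAt (fun y => E y - 1) (mu * (p - q) * E x) x := (hEd x).sub_const 1
    have hd2 : HasDerivAt (fun y => p - q * E y) (-(q * (mu * (p - q) * E x))) x :=
      ((hEd x).const_mul q).const_sub p
    have := hnum.div hd2 (hden x hx).ne'
    convert this using 1
    all_goals try rfl
    have h0 : (p - q * E x) ≠ 0 := (hden x hx).ne'
    field_simp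
    ring
  -- positivity of the derivative
  have hpos : ∀ x ∈ D, 0 < mu * (p - q) ^ 2 * E x / (p - q * E x) ^ 2 := fun x hx =>
    div_pos (mul_pos (mul_pos hmu (pow_pos hΔ 2)) (Real.exp_pos _)) (pow_pos (hden x hx) 2)
  have hintD : interior D ⊆ D := interior_subset
  constructor
  · -- strict monotonicity
    apply strictMonoOn_of_deriv_pos hDconv hc
    intro x hx
    rw [(hfd x (hintD hx)).deriv]
    exact hpos x (hintD hx)
  · -- convexity
    apply MonotoneOn.convexOn_of_deriv hDconv hc
    · exact fun x hx => ((hfd x (hintD hx)).differentiableAt).differentiableWithinAt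
    · intro x hx y hy hxy
      rw [(hfd x (hintD hx)).deriv, (hfd y (hintD hy)).deriv]
      have hExy : E x ≤ E y := by
        apply Real.exp_le_exp.2
        have h1 : lam + mu * x ≤ lam + mu * y := by nlinarith
        exact mul_le_mul_of_nonneg_right h1 hΔ.le
      apply div_le_div₀ (mul_pos (mul_pos hmu (pow_pos hΔ 2)) (Real.exp_pos _)).le
      · exact mul_le_mul_of_nonneg_left hExy (by positivity)
      · exact pow_pos (hden y (hintD hy)) 2
      · have h1 : 0 < p - q * E y := hden y (hintD hy)
        have h2 : p - q * E y ≤ p - q * E x := by nlinarith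
        exact pow_le_pow_left₀ h1.le h2 2
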